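/- Let Λ be a finite connected graph with oriented edges, r ≥ 2, and for each edge e a positive integer l(e), with r | l(e) whenever e is non-separating. For a separating edge e joining v₊ to v₋, removing e splits the graph into two components with vertex sets V⁺ (containing v₊) and V⁻; write ε_e⁺(t) = Σ_{v∈V⁺} t_v ∈ ℤ/rℤ. Let P_r ⊆ (ℤ/rℤ)^E be the product over edges of the subgroup of ℤ/rℤ of order gcd(r,l(e)). Then for t ∈ (ℤ/rℤ)^V with ε(t) = 0, the following are equivalent: (1) t lies in the image of P_r under the boundary ∂; (2) for every separating edge e, the element ε_e⁺(t) lies in the subgroup of ℤ/rℤ of order gcd(r, l(e)). -/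

import Mathlib

open scoped Classical

/-- Adjacency relation of an oriented (multi)graph given by source and target maps. -/
def GraphAdj {V E : Type*} (s t : E → V) (v w : V) : Prop :=
  ∃ e, (s e = v ∧ t e = w) ∨ (s e = w ∧ t e = v)

/-- The graph is connected: any two vertices are joined by a walk. -/
def GraphConnected {V E : Type*} (s t : E → V) : Prop :=
  ∀ v w : V, Relation.ReflTransGen (GraphAdj s t) v w

/-- The simplicial boundary map `∂ : (ℤ/rℤ)^E → (ℤ/rℤ)^V`. -/
def graphBoundary (r : ℕ) {V E : Type*} [Fintype E] [DecidableEq V]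
    (s t : E → V) (f : E → ZMod r) : V → ZMod r :=
  fun v => ∑ e, f e * (((if t e = v then 1 else 0) : ZMod r) - (if s e = v then 1 else 0))

/-- Membership in `P_r ⊆ (ℤ/rℤ)^E`: each coordinate lies in the subgroup of `ℤ/rℤ`
of order `gcd(r, l e)`, i.e. is killed by `gcd(r, l e)`. -/
def memPr (r : ℕ) {E : Type*} (l : E → ℕ) (f : E → ZMod r) : Prop :=
  ∀ e, ((Nat.gcd r (l e) : ℕ) : ZMod r) * f e = 0

/-- The partial augmentation `ε_{e₀}⁺(t)`: the sum of the coordinates of `t` over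
the vertices reachable from the head `t e₀` of the edge `e₀` in the graph with
`e₀` deleted. -/
noncomputable def epsPlus (r : ℕ) {V E : Type*} [Fintype V]
    (s t : E → V) (e₀ : E) (tv : V → ZMod r) : ZMod r :=
  ∑ v, if Relation.ReflTransGen
      (GraphAdj (fun e : {e : E // e ≠ e₀} => s e.1)
        (fun e : {e : E // e ≠ e₀} => t e.1)) (t e₀) v
    then tv v else 0

section Aux

variable {V E : Type*} [Fintype V] [Fintype E] [DecidableEq V] {s t : E → V} {r : ℕ}

lemma graphAdj_symm {v w : V} (h : GraphAdj s t v w) : GraphAdj s t w v := by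
  obtain ⟨e, h | h⟩ := h
  exacts [⟨e, Or.inr h⟩, ⟨e, Or.inl h⟩]

lemma sum_filter_boundary (A : V → Prop) (f : E → ZMod r) :
    (∑ v, if A v then graphBoundary r s t f v else 0)
      = ∑ e, f e * ((if A (t e) then 1 else 0) - (if A (s e) then 1 else 0)) := by
  unfold graphBoundary
  have h1 : ∀ v, (if A v then (∑ e, f e * (((if t e = v then 1 else 0) : ZMod r)
      - (if s e = v then 1 else 0))) else 0)
      = ∑ e, if A v then f e * (((if t e = v then 1 else 0) : ZMod r)
        - (if s e = v then 1 else 0)) else 0 := by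
    intro v; split_ifs with h <;> simp
  simp_rw [h1]
  rw [Finset.sum_comm]
  refine Finset.sum_congr rfl fun e _ => ?_
  have h2 : ∀ v, (if A v then f e * (((if t e = v then 1 else 0) : ZMod r)
      - (if s e = v then 1 else 0)) else 0)
      = f e * ((if t e = v then (if A v then (1:ZMod r) else 0) else 0)
        - (if s e = v then (if A v then (1:ZMod r) else 0) else 0)) := by
    intro v; split_ifs <;> simp_all
  simp_rw [h2, ← Finset.mul_sum, Finset.sum_sub_distrib, Finset.sum_ite_eq,
    Finset.mem_univ, if_true]

lemma sep_val (hconn : GraphConnected s t) (e₀ : E)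
    (hsep : ¬ GraphConnected (fun e : {e : E // e ≠ e₀} => s e.1)
        (fun e : {e : E // e ≠ e₀} => t e.1))
    (f : E → ZMod r) :
    f e₀ = epsPlus r s t e₀ (graphBoundary r s t f) := by
  set s' := (fun e : {e : E // e ≠ e₀} => s e.1) with hs'
  set t' := (fun e : {e : E // e ≠ e₀} => t e.1) with ht'
  set A := fun v => Relation.ReflTransGen (GraphAdj s' t') (t e₀) v with hA
  have hAadj : ∀ {v w}, A v → GraphAdj s' t' v w → A w := fun h h' => h.tail h'
  have hAadj' : ∀ {v w}, A v → GraphAdj s' t' w v → A w :=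
    fun h h' => h.tail (graphAdj_symm h')
  have hAt : A (t e₀) := Relation.ReflTransGen.refl
  have hAs : ¬ A (s e₀) := by
    intro hAs
    apply hsep
    have step : ∀ a b, GraphAdj s t a b → Relation.ReflTransGen (GraphAdj s' t') a b := by
      rintro a b ⟨e, he⟩
      by_cases h : e = e₀
      · subst h
        have hsym : Symmetric (GraphAdj s' t') := fun _ _ => graphAdj_symm
        rcases he with ⟨h1, h2⟩ | ⟨h1, h2⟩
        · subst h1; subst h2; exact (haveI : Std.Symm (GraphAdj s' t') := ⟨fun _ _ h => hsym h⟩; Relation.ReflTransGen.symmetric).symm _ _ hAs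
        · subst h1; subst h2; exact hAs
      · rcases he with ⟨h1, h2⟩ | ⟨h1, h2⟩
        · exact Relation.ReflTransGen.single ⟨⟨e, h⟩, Or.inl ⟨h1, h2⟩⟩
        · exact Relation.ReflTransGen.single ⟨⟨e, h⟩, Or.inr ⟨h1, h2⟩⟩
    intro v w
    induction hconn v w with
    | refl => exact Relation.ReflTransGen.refl
    | tail h1 h2 ih => exact ih.trans (step _ _ h2)
  have key : epsPlus r s t e₀ (graphBoundary r s t f)
      = ∑ e, f e * ((if A (t e) then 1 else 0) - (if A (s e) then 1 else 0)) :=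
    sum_filter_boundary A f
  rw [key, Finset.sum_eq_single e₀]
  · simp [hAt, hAs]
  · intro e _ hne
    have hiff : A (t e) ↔ A (s e) :=
      ⟨fun h => hAadj' h ⟨⟨e, hne⟩, Or.inl ⟨rfl, rfl⟩⟩,
       fun h => hAadj h ⟨⟨e, hne⟩, Or.inl ⟨rfl, rfl⟩⟩⟩
    simp [hiff]
  · simp

noncomputable def bd (r : ℕ) (s t : E → V) : (E → ZMod r) →ₗ[ZMod r] (V → ZMod r) where
  toFun := graphBoundary r s t
  map_add' f g := by
    funext v
    simp [graphBoundary, add_mul, Finset.sum_add_distrib]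
  map_smul' c f := by
    funext v
    simp [graphBoundary, Finset.mul_sum, mul_assoc, smul_eq_mul]

lemma dipole_mem (v w : V) (h : Relation.ReflTransGen (GraphAdj s t) v w) :
    (fun u => (((if u = w then 1 else 0) : ZMod r) - (if u = v then 1 else 0)))
      ∈ LinearMap.range (bd r s t) := by
  induction h with
  | refl =>
    have : (fun u => (((if u = v then 1 else 0) : ZMod r) - (if u = v then 1 else 0))) = 0 := by
      funext u; simp
    rw [this]; exact (LinearMap.range (bd r s t)).zero_mem
  | @tail b c hb hadj ih =>
    have hbc : (fun u => (((if u = c then 1 else 0) : ZMod r) - (if u = b then 1 else 0)))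
        ∈ LinearMap.range (bd r s t) := by
      obtain ⟨e, ⟨h1, h2⟩ | ⟨h1, h2⟩⟩ := hadj
      · refine ⟨fun e' => if e' = e then 1 else 0, ?_⟩
        funext u
        show graphBoundary r s t _ u = _
        unfold graphBoundary
        rw [Finset.sum_eq_single e]
        · subst h1; subst h2; simp [eq_comm]
        · intro e' _ hne; simp [hne]
        · simp
      · refine ⟨fun e' => if e' = e then -1 else 0, ?_⟩
        funext u
        show graphBoundary r s t _ u = _
        unfold graphBoundary
        rw [Finset.sum_eq_single e]
        · subst h1; subst h2; simp [eq_comm]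
        · intro e' _ hne; simp [hne]
        · simp
    have hsum := (LinearMap.range (bd r s t)).add_mem ih hbc
    have : (fun u => (((if u = c then 1 else 0) : ZMod r) - (if u = v then 1 else 0)))
        = (fun u => (((if u = b then 1 else 0) : ZMod r) - (if u = v then 1 else 0)))
          + (fun u => (((if u = c then 1 else 0) : ZMod r) - (if u = b then 1 else 0))) := by
      funext u; simp
    rw [this]; exact hsum

lemma exists_boundary (hconn : GraphConnected s t) (tv : V → ZMod r)
    (htv : (∑ v, tv v) = 0) : ∃ f, graphBoundary r s t f = tv := by
  rcases isEmpty_or_nonempty V with h | h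
  · exact ⟨0, funext fun v => (h.false v).elim⟩
  · obtain ⟨v₀⟩ := h
    have hmem : tv ∈ LinearMap.range (bd (E := E) r s t) := by
      have htv' : tv = ∑ w, tv w • (fun u => (((if u = w then 1 else 0) : ZMod r)
          - (if u = v₀ then 1 else 0))) := by
        funext u
        simp only [Finset.sum_apply, Pi.smul_apply, smul_eq_mul, mul_sub,
          Finset.sum_sub_distrib, mul_ite, mul_one, mul_zero]
        rw [Finset.sum_ite_eq]
        simp only [Finset.mem_univ, if_true]
        by_cases hu : u = v₀ <;> simp [hu, htv]
      rw [htv']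
      exact Submodule.sum_mem _ fun w _ =>
        Submodule.smul_mem _ _ (dipole_mem v₀ w (hconn v₀ w))
    exact hmem

end Aux

/-- Lemma 3.10: assume `r ∣ l e` for every non-separating edge `e`. Then for
`t : (ℤ/rℤ)^V` with `ε t = 0`, `t` lies in the image of `P_r` under `∂` iff for
every separating edge `e` the partial augmentation `ε_e⁺(t)` lies in the subgroup
`P_e ⊆ ℤ/rℤ` of order `gcd(r, l e)`. -/
theorem mem_image_restricted_boundary_iff {V E : Type*} [Fintype V] [Fintype E]
    [DecidableEq V]
    (s t : E → V) (r : ℕ) (hr : 2 ≤ r) (l : E → ℕ) (hl : ∀ e, 0 < l e)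
    (hconn : GraphConnected s t)
    (hnsl : ∀ e₀ : E, GraphConnected (fun e : {e : E // e ≠ e₀} => s e.1)
      (fun e : {e : E // e ≠ e₀} => t e.1) → r ∣ l e₀)
    (tv : V → ZMod r) (htv : (∑ v, tv v) = 0) :
    (∃ f : E → ZMod r, memPr r l f ∧ graphBoundary r s t f = tv) ↔
      ∀ e₀ : E, ¬ GraphConnected (fun e : {e : E // e ≠ e₀} => s e.1)
          (fun e : {e : E // e ≠ e₀} => t e.1) →
        ((Nat.gcd r (l e₀) : ℕ) : ZMod r) * epsPlus r s t e₀ tv = 0 := by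
  constructor
  · rintro ⟨f, hP, hf⟩ e₀ hsep
    have := sep_val hconn e₀ hsep f
    rw [hf] at this
    rw [← this]
    exact hP e₀
  · intro h
    obtain ⟨f, hf⟩ := exists_boundary hconn tv htv
    refine ⟨f, fun e => ?_, hf⟩
    by_cases hsep : GraphConnected (fun e' : {e' : E // e' ≠ e} => s e'.1)
        (fun e' : {e' : E // e' ≠ e} => t e'.1)
    · have hdvd : r ∣ l e := hnsl e hsep
      rw [Nat.gcd_eq_left hdvd, ZMod.natCast_self, zero_mul]
    · have := sep_val hconn e hsep f
      rw [hf] at this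
      rw [this]
      exact h e hsep
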